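/- Let f: ℝ^n → ℝ be defined by f(x) = c·Σ_{i=1}^l (sqrt(μ² + (wᵢᵀx)²) − μ) + (1/2)‖Ax − b‖₂², where c > 0, μ > 0, wᵢ ∈ ℝ^n are the columns of W ∈ ℝ^{n×l}, A ∈ ℝ^{m×n}, b ∈ ℝ^m, and Ker(Wᵀ) ∩ Ker(A) = {0}. Then f is strictly convex and has a unique global minimizer. -/

import Mathlib

open scoped Matrix

private lemma huber_sc {μ : ℝ} (hμ : 0 < μ) :
    StrictConvexOn ℝ Set.univ fun t : ℝ => Real.sqrt (μ ^ 2 + t ^ 2) - μ := by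
  have hpos : ∀ t : ℝ, 0 < μ ^ 2 + t ^ 2 := fun t => by positivity
  have hd1 : ∀ t : ℝ, HasDerivAt (fun t : ℝ => Real.sqrt (μ ^ 2 + t ^ 2) - μ)
      (t / Real.sqrt (μ ^ 2 + t ^ 2)) t := by
    intro t
    have hin : HasDerivAt (fun t : ℝ => μ ^ 2 + t ^ 2) (2 * t) t := by
      simpa using (hasDerivAt_pow 2 t).const_add (μ ^ 2)
    have := (hin.sqrt (hpos t).ne').sub_const μ
    refine this.congr_deriv ?_
    rw [div_eq_div_iff (by positivity) (Real.sqrt_pos.2 (hpos t)).ne']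
    ring
  have hds : deriv (fun t : ℝ => Real.sqrt (μ ^ 2 + t ^ 2) - μ)
      = fun t => t / Real.sqrt (μ ^ 2 + t ^ 2) := funext fun t => (hd1 t).deriv
  apply strictConvexOn_of_deriv2_pos convex_univ
  · exact Continuous.continuousOn (by continuity)
  · intro x _
    have hs : 0 < Real.sqrt (μ ^ 2 + x ^ 2) := Real.sqrt_pos.2 (hpos x)
    have hd2 : HasDerivAt (fun t => t / Real.sqrt (μ ^ 2 + t ^ 2))
        ((1 * Real.sqrt (μ ^ 2 + x ^ 2) - x * (x / Real.sqrt (μ ^ 2 + x ^ 2))) /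
          Real.sqrt (μ ^ 2 + x ^ 2) ^ 2) x := by
      have hin : HasDerivAt (fun t : ℝ => μ ^ 2 + t ^ 2) (2 * x) x := by
        simpa using (hasDerivAt_pow 2 x).const_add (μ ^ 2)
      have hsq : HasDerivAt (fun t : ℝ => Real.sqrt (μ ^ 2 + t ^ 2))
          (x / Real.sqrt (μ ^ 2 + x ^ 2)) x := by
        have := hin.sqrt (hpos x).ne'
        convert this using 1
        rw [div_eq_div_iff hs.ne' (by positivity)]
        ring
      exact (hasDerivAt_id x).div hsq hs.ne'
    have heq : deriv^[2] (fun t : ℝ => Real.sqrt (μ ^ 2 + t ^ 2) - μ) x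
        = (1 * Real.sqrt (μ ^ 2 + x ^ 2) - x * (x / Real.sqrt (μ ^ 2 + x ^ 2))) /
          Real.sqrt (μ ^ 2 + x ^ 2) ^ 2 := by
      simp only [Function.iterate_succ, Function.iterate_zero, Function.comp_apply, id_eq]
      rw [hds]
      exact hd2.deriv
    rw [heq]
    apply div_pos _ (by positivity)
    have hmul : Real.sqrt (μ ^ 2 + x ^ 2) * Real.sqrt (μ ^ 2 + x ^ 2) = μ ^ 2 + x ^ 2 :=
      Real.mul_self_sqrt (hpos x).le
    rw [show 1 * Real.sqrt (μ ^ 2 + x ^ 2) - x * (x / Real.sqrt (μ ^ 2 + x ^ 2))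
        = μ ^ 2 / Real.sqrt (μ ^ 2 + x ^ 2) by
      field_simp
      nlinarith [hmul]]
    positivity

private lemma quad_id {m : ℕ} (p q b : Fin m → ℝ) {a a' : ℝ} (hab : a + a' = 1) :
    ((a • p + a' • q) - b) ⬝ᵥ ((a • p + a' • q) - b)
      = a * ((p - b) ⬝ᵥ (p - b)) + a' * ((q - b) ⬝ᵥ (q - b)) - a * a' * ((p - q) ⬝ᵥ (p - q)) := by
  simp only [dotProduct, Pi.sub_apply, Pi.add_apply, Pi.smul_apply, smul_eq_mul,
    Finset.mul_sum, ← Finset.sum_sub_distrib, ← Finset.sum_add_distrib]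
  refine Finset.sum_congr rfl fun i _ => ?_
  have h : a' = 1 - a := by linarith
  subst h; ring

private lemma dot_self_nonneg' {m : ℕ} (v : Fin m → ℝ) : 0 ≤ v ⬝ᵥ v :=
  Finset.sum_nonneg fun _ _ => mul_self_nonneg _

private lemma norm_sq_le_dot {m : ℕ} (v : Fin m → ℝ) : ‖v‖ ^ 2 ≤ v ⬝ᵥ v := by
  have h : ‖v‖ ≤ Real.sqrt (v ⬝ᵥ v) := by
    refine pi_norm_le_iff_of_nonneg (Real.sqrt_nonneg _) |>.2 fun i => ?_
    rw [Real.norm_eq_abs, ← Real.sqrt_sq_eq_abs]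
    apply Real.sqrt_le_sqrt
    rw [sq (v i)]
    exact Finset.single_le_sum (fun j _ => mul_self_nonneg (v j)) (Finset.mem_univ i)
  calc ‖v‖ ^ 2 ≤ Real.sqrt (v ⬝ᵥ v) ^ 2 := pow_le_pow_left₀ (norm_nonneg _) h 2
    _ = v ⬝ᵥ v := Real.sq_sqrt (dot_self_nonneg' v)

section
variable {m n l : ℕ}

private noncomputable def fobj (A : Matrix (Fin m) (Fin n) ℝ) (W : Matrix (Fin n) (Fin l) ℝ)
    (b : Fin m → ℝ) (c μ : ℝ) : (Fin n → ℝ) → ℝ := fun x =>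
  c * ∑ i : Fin l, (Real.sqrt (μ ^ 2 + ((Wᵀ *ᵥ x) i) ^ 2) - μ) +
    (1 / 2) * ((A *ᵥ x - b) ⬝ᵥ (A *ᵥ x - b))

private lemma fobj_sc (A : Matrix (Fin m) (Fin n) ℝ) (W : Matrix (Fin n) (Fin l) ℝ)
    (b : Fin m → ℝ) {c μ : ℝ} (hc : 0 < c) (hμ : 0 < μ)
    (hker : ∀ x : Fin n → ℝ, Wᵀ *ᵥ x = 0 → A *ᵥ x = 0 → x = 0) :
    StrictConvexOn ℝ Set.univ (fobj A W b c μ) := by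
  refine ⟨convex_univ, fun x _ y _ hxy a a' ha ha' hab => ?_⟩
  have hg := huber_sc hμ
  have hWc : Wᵀ *ᵥ (a • x + a' • y) = a • (Wᵀ *ᵥ x) + a' • (Wᵀ *ᵥ y) := by
    simp [Matrix.mulVec_add, Matrix.mulVec_smul]
  have hAc : A *ᵥ (a • x + a' • y) = a • (A *ᵥ x) + a' • (A *ᵥ y) := by
    simp [Matrix.mulVec_add, Matrix.mulVec_smul]
  have hquad := quad_id (A *ᵥ x) (A *ᵥ y) b hab
  have hAnn : 0 ≤ ((A *ᵥ x) - (A *ᵥ y)) ⬝ᵥ ((A *ᵥ x) - (A *ᵥ y)) := dot_self_nonneg' _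
  have hterm_le : ∀ i : Fin l,
      Real.sqrt (μ ^ 2 + (a * (Wᵀ *ᵥ x) i + a' * (Wᵀ *ᵥ y) i) ^ 2) - μ
        ≤ a * (Real.sqrt (μ ^ 2 + ((Wᵀ *ᵥ x) i) ^ 2) - μ)
          + a' * (Real.sqrt (μ ^ 2 + ((Wᵀ *ᵥ y) i) ^ 2) - μ) := fun i => by
    simpa using hg.convexOn.2 (Set.mem_univ ((Wᵀ *ᵥ x) i)) (Set.mem_univ ((Wᵀ *ᵥ y) i))
      ha.le ha'.le hab
  unfold fobj
  rw [hWc, hAc, hquad]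
  simp only [Pi.add_apply, Pi.smul_apply, smul_eq_mul]
  by_cases hW : Wᵀ *ᵥ x = Wᵀ *ᵥ y
  · have hA0 : A *ᵥ x - A *ᵥ y ≠ 0 := fun h0 => hxy (sub_eq_zero.1 (hker (x - y)
      (by rw [Matrix.mulVec_sub, hW, sub_self]) (by rwa [Matrix.mulVec_sub] )))
    have hD : 0 < ((A *ᵥ x) - (A *ᵥ y)) ⬝ᵥ ((A *ᵥ x) - (A *ᵥ y)) :=
      hAnn.lt_of_ne fun h => hA0 (dotProduct_self_eq_zero.1 h.symm)
    rw [hW]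
    have hcomb : ∀ i : Fin l, a * (Wᵀ *ᵥ y) i + a' * (Wᵀ *ᵥ y) i = (Wᵀ *ᵥ y) i := fun i => by
      rw [← add_mul, hab, one_mul]
    simp only [hcomb]
    have ha2 : a' = 1 - a := by linarith
    subst ha2
    nlinarith [mul_pos (mul_pos ha ha') hD]
  · obtain ⟨i₀, hi₀⟩ : ∃ i, (Wᵀ *ᵥ x) i ≠ (Wᵀ *ᵥ y) i := by
      by_contra h; push_neg at h; exact hW (funext h)
    have hlt : Real.sqrt (μ ^ 2 + (a * (Wᵀ *ᵥ x) i₀ + a' * (Wᵀ *ᵥ y) i₀) ^ 2) - μ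
        < a * (Real.sqrt (μ ^ 2 + ((Wᵀ *ᵥ x) i₀) ^ 2) - μ)
          + a' * (Real.sqrt (μ ^ 2 + ((Wᵀ *ᵥ y) i₀) ^ 2) - μ) := by
      simpa using hg.2 (Set.mem_univ _) (Set.mem_univ _) hi₀ ha ha' hab
    have hsum : ∑ i : Fin l, (Real.sqrt (μ ^ 2 + (a * (Wᵀ *ᵥ x) i + a' * (Wᵀ *ᵥ y) i) ^ 2) - μ)
        < ∑ i : Fin l, (a * (Real.sqrt (μ ^ 2 + ((Wᵀ *ᵥ x) i) ^ 2) - μ)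
          + a' * (Real.sqrt (μ ^ 2 + ((Wᵀ *ᵥ y) i) ^ 2) - μ)) :=
      Finset.sum_lt_sum (fun i _ => hterm_le i) ⟨i₀, Finset.mem_univ _, hlt⟩
    rw [Finset.sum_add_distrib, ← Finset.mul_sum, ← Finset.mul_sum] at hsum
    have hcs := mul_lt_mul_of_pos_left hsum hc
    have hDn : 0 ≤ a * a' * (((A *ᵥ x) - (A *ᵥ y)) ⬝ᵥ ((A *ᵥ x) - (A *ᵥ y))) :=
      mul_nonneg (mul_nonneg ha.le ha'.le) hAnn
    nlinarith [hcs, hDn]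


private lemma fobj_cont (A : Matrix (Fin m) (Fin n) ℝ) (W : Matrix (Fin n) (Fin l) ℝ)
    (b : Fin m → ℝ) (c μ : ℝ) : Continuous (fobj A W b c μ) := by
  unfold fobj
  simp only [Matrix.mulVec, dotProduct, Pi.sub_apply]
  fun_prop

private lemma fobj_tendsto (A : Matrix (Fin m) (Fin n) ℝ) (W : Matrix (Fin n) (Fin l) ℝ)
    (b : Fin m → ℝ) {c μ : ℝ} (hc : 0 < c) (hμ : 0 < μ)
    (hker : ∀ x : Fin n → ℝ, Wᵀ *ᵥ x = 0 → A *ᵥ x = 0 → x = 0) :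
    Filter.Tendsto (fobj A W b c μ) (Filter.cocompact _) Filter.atTop := by
  set T : (Fin n → ℝ) →ₗ[ℝ] (Fin l → ℝ) × (Fin m → ℝ) :=
    LinearMap.prod (Matrix.mulVecLin Wᵀ) (Matrix.mulVecLin A) with hT
  have hkerT : LinearMap.ker T = ⊥ := by
    refine LinearMap.ker_eq_bot'.2 fun z hz => ?_
    have h1 : Wᵀ *ᵥ z = 0 ∧ A *ᵥ z = 0 := by
      have := Prod.mk.injEq (Wᵀ *ᵥ z) (A *ᵥ z) 0 0 ▸ hz
      have h2 : z ᵥ* W = 0 ∧ A *ᵥ z = 0 := by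
        simpa [hT, LinearMap.prod_apply, Prod.ext_iff] using hz
      exact ⟨by rw [Matrix.mulVec_transpose]; exact h2.1, h2.2⟩
    exact hker z h1.1 h1.2
  have hclosed := LinearMap.isClosedEmbedding_of_injective hkerT
  have hTn : Filter.Tendsto (fun x => ‖T x‖) (Filter.cocompact _) Filter.atTop :=
    tendsto_norm_cocompact_atTop.comp hclosed.tendsto_cocompact
  rw [Filter.tendsto_atTop]
  intro M
  filter_upwards [hTn.eventually_ge_atTop
      (max (μ + (|M| + 1) / c) (‖b‖ + Real.sqrt (2 * (|M| + 1))))] with x hx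
  have hterm_nn : ∀ i : Fin l, 0 ≤ Real.sqrt (μ ^ 2 + ((Wᵀ *ᵥ x) i) ^ 2) - μ := by
    intro i
    have h := Real.sqrt_le_sqrt (show μ ^ 2 ≤ μ ^ 2 + ((Wᵀ *ᵥ x) i) ^ 2 from le_add_of_nonneg_right (sq_nonneg _))
    rw [Real.sqrt_sq hμ.le] at h
    linarith
  have hSnn : 0 ≤ ∑ i : Fin l, (Real.sqrt (μ ^ 2 + ((Wᵀ *ᵥ x) i) ^ 2) - μ) :=
    Finset.sum_nonneg fun i _ => hterm_nn i
  have hQnn : 0 ≤ (A *ᵥ x - b) ⬝ᵥ (A *ᵥ x - b) := dot_self_nonneg' _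
  have hnorm : ‖T x‖ = max ‖Wᵀ *ᵥ x‖ ‖A *ᵥ x‖ := rfl
  rw [hnorm, le_max_iff] at hx
  unfold fobj
  rcases hx with hx | hx
  · -- large ‖Wᵀ x‖
    have hnu : ‖Wᵀ *ᵥ x‖ ≤ (∑ i : Fin l, (Real.sqrt (μ ^ 2 + ((Wᵀ *ᵥ x) i) ^ 2) - μ)) + μ := by
      refine (pi_norm_le_iff_of_nonneg (by linarith)).2 fun i => ?_
      have h1 : |(Wᵀ *ᵥ x) i| ≤ Real.sqrt (μ ^ 2 + ((Wᵀ *ᵥ x) i) ^ 2) := by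
        rw [← Real.sqrt_sq_eq_abs]
        exact Real.sqrt_le_sqrt (by nlinarith [sq_nonneg μ])
      have h2 : Real.sqrt (μ ^ 2 + ((Wᵀ *ᵥ x) i) ^ 2) - μ
          ≤ ∑ j : Fin l, (Real.sqrt (μ ^ 2 + ((Wᵀ *ᵥ x) j) ^ 2) - μ) :=
        Finset.single_le_sum (fun j _ => hterm_nn j) (Finset.mem_univ i)
      rw [Real.norm_eq_abs]
      linarith
    have hRu : μ + (|M| + 1) / c ≤ ‖Wᵀ *ᵥ x‖ := le_trans (le_max_left _ _) hx
    have h3 : (|M| + 1) / c ≤ (∑ i : Fin l, (Real.sqrt (μ ^ 2 + ((Wᵀ *ᵥ x) i) ^ 2) - μ)) := by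
      linarith
    have h4 : |M| + 1 ≤ c * (∑ i : Fin l, (Real.sqrt (μ ^ 2 + ((Wᵀ *ᵥ x) i) ^ 2) - μ)) := by
      have := mul_le_mul_of_nonneg_left h3 hc.le
      rwa [mul_div_cancel₀ _ hc.ne'] at this
    have hM := le_abs_self M
    linarith
  · -- large ‖A x‖
    have h5 : ‖b‖ + Real.sqrt (2 * (|M| + 1)) ≤ ‖A *ᵥ x‖ := le_trans (le_max_right _ _) hx
    have h6 : Real.sqrt (2 * (|M| + 1)) ≤ ‖A *ᵥ x - b‖ := by
      have := norm_sub_norm_le (A *ᵥ x) b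
      linarith
    have h7 : 2 * (|M| + 1) ≤ ‖A *ᵥ x - b‖ ^ 2 := by
      have h8 := pow_le_pow_left₀ (Real.sqrt_nonneg (2 * (|M| + 1))) h6 2
      rwa [Real.sq_sqrt (by positivity : (0:ℝ) ≤ 2 * (|M| + 1))] at h8
    have h9 := norm_sq_le_dot (A *ᵥ x - b)
    have hM := le_abs_self M
    have hcS : 0 ≤ c * ∑ i : Fin l, (Real.sqrt (μ ^ 2 + ((Wᵀ *ᵥ x) i) ^ 2) - μ) :=
      mul_nonneg hc.le hSnn
    linarith
end

/-- The smoothed compressed-sensing objective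
`f(x) = c Σᵢ (√(μ² + (wᵢᵀ x)²) − μ) + (1/2)‖Ax − b‖²` with `c > 0`, `μ > 0` and
`Ker(Wᵀ) ∩ Ker(A) = {0}` is strictly convex and has a unique global minimizer. -/
theorem smoothed_objective_strictly_convex_unique_min {m n l : ℕ}
    (A : Matrix (Fin m) (Fin n) ℝ) (W : Matrix (Fin n) (Fin l) ℝ)
    (b : Fin m → ℝ) (c μ : ℝ) (hc : 0 < c) (hμ : 0 < μ)
    (hker : ∀ x : Fin n → ℝ, Wᵀ *ᵥ x = 0 → A *ᵥ x = 0 → x = 0) :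
    StrictConvexOn ℝ Set.univ
      (fun x : Fin n → ℝ =>
        c * ∑ i : Fin l, (Real.sqrt (μ ^ 2 + ((Wᵀ *ᵥ x) i) ^ 2) - μ) +
        (1 / 2) * ((A *ᵥ x - b) ⬝ᵥ (A *ᵥ x - b))) ∧
    ∃! x : Fin n → ℝ,
      ∀ z : Fin n → ℝ,
        c * ∑ i : Fin l, (Real.sqrt (μ ^ 2 + ((Wᵀ *ᵥ x) i) ^ 2) - μ) +
          (1 / 2) * ((A *ᵥ x - b) ⬝ᵥ (A *ᵥ x - b)) ≤
        c * ∑ i : Fin l, (Real.sqrt (μ ^ 2 + ((Wᵀ *ᵥ z) i) ^ 2) - μ) +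
          (1 / 2) * ((A *ᵥ z - b) ⬝ᵥ (A *ᵥ z - b)) := by
  have hsc := fobj_sc A W b hc hμ hker
  obtain ⟨x₀, hx₀⟩ := (fobj_cont A W b c μ).exists_forall_le (fobj_tendsto A W b hc hμ hker)
  exact ⟨hsc, ⟨x₀, hx₀, fun y hy =>
    hsc.eq_of_isMinOn (isMinOn_iff.2 fun z _ => hy z) (isMinOn_iff.2 fun z _ => hx₀ z)
      (Set.mem_univ y) (Set.mem_univ x₀)⟩⟩
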